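/- Let X and X̃ be two n×k matrices with entries in {−1,+1} that differ only in row i. Write L = [1_n, X] (with columns indexed 0,…,k and the convention x_{i0} = 1 for all i), S = LᵀL with entries s_{jl}, and Q(X) = Σ_{j=0}^k Σ_{l=0}^k s_{jl}². Let J = { j ∈ {0,…,k} : x̃_{ij} = −x_{ij} }. Then Q(X̃) − Q(X) = 8|J|(k+1−|J|) − 8 Σ_{j∈J} [ x_{ij} Σ_{l∉J} s_{jl} x_{il} ]. -/

import Mathlib

open Matrix BigOperators

/-- `L = [1ₙ, X]`: the matrix `X` with a column of ones prepended;
columns are indexed `0,…,k` with `L i 0 = 1`. -/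
noncomputable def augment {n k : ℕ} (X : Matrix (Fin n) (Fin k) ℝ) :
    Matrix (Fin n) (Fin (k + 1)) ℝ :=
  Matrix.of fun i j => (Fin.cons (1 : ℝ) (X i) : Fin (k + 1) → ℝ) j

/-- `S = LᵀL`, the information matrix. -/
noncomputable def infoMat {n k : ℕ} (X : Matrix (Fin n) (Fin k) ℝ) :
    Matrix (Fin (k + 1)) (Fin (k + 1)) ℝ :=
  (augment X)ᵀ * augment X

/-- `Q(X) = tr(S²) = Σⱼ Σₗ s_{jl}²`. -/
noncomputable def Qcrit {n k : ℕ} (X : Matrix (Fin n) (Fin k) ℝ) : ℝ :=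
  ∑ j, ∑ l, (infoMat X j l) ^ 2

lemma aug_pm {n k : ℕ} {X : Matrix (Fin n) (Fin k) ℝ}
    (hX : ∀ i j, X i j = 1 ∨ X i j = -1) :
    ∀ i j, augment X i j = 1 ∨ augment X i j = -1 := by
  intro i j
  refine Fin.cases ?_ ?_ j
  · left; simp [augment]
  · intro j'; simpa [augment] using hX i j'

lemma info_apply {n k : ℕ} (X : Matrix (Fin n) (Fin k) ℝ) (j l : Fin (k+1)) :
    infoMat X j l = ∑ i, augment X i j * augment X i l := by
  simp [infoMat, Matrix.mul_apply, Matrix.transpose_apply]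

lemma info_symm {n k : ℕ} (X : Matrix (Fin n) (Fin k) ℝ) (j l : Fin (k+1)) :
    infoMat X j l = infoMat X l j := by
  simp [info_apply, mul_comm]

/-- Proposition 1: if `X` and `X̃` differ only in row `i`, then
with `J = {j : x̃ᵢⱼ = −xᵢⱼ}` (columns of `L` indexed `0,…,k`),
`Q(X̃) − Q(X) = 8|J|(k+1−|J|) − 8 Σ_{j∈J} [xᵢⱼ Σ_{l∉J} sⱼₗ xᵢₗ]`. -/
theorem stmt_0 {n k : ℕ} (X Xt : Matrix (Fin n) (Fin k) ℝ)
    (hX : ∀ i j, X i j = 1 ∨ X i j = -1)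
    (hXt : ∀ i j, Xt i j = 1 ∨ Xt i j = -1)
    (i : Fin n)
    (hrow : ∀ i', i' ≠ i → ∀ j, Xt i' j = X i' j)
    (J : Finset (Fin (k + 1)))
    (hJ : ∀ j : Fin (k + 1), j ∈ J ↔ augment Xt i j = -augment X i j) :
    Qcrit Xt - Qcrit X
      = 8 * (J.card : ℝ) * ((k : ℝ) + 1 - (J.card : ℝ))
        - 8 * ∑ j ∈ J, (augment X i j *
            ∑ l ∈ Jᶜ, infoMat X j l * augment X i l) := by
  classical
  set L := augment X with hLdef
  set Lt := augment Xt with hLtdef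
  have hpm : ∀ i' j, L i' j = 1 ∨ L i' j = -1 := aug_pm hX
  have hpmt : ∀ i' j, Lt i' j = 1 ∨ Lt i' j = -1 := aug_pm hXt
  set e : Fin (k+1) → ℝ := fun j => if j ∈ J then -1 else 1 with he
  -- row i of Lt in terms of row i of L
  have hLt_row : ∀ j, Lt i j = e j * L i j := by
    intro j
    by_cases hj : j ∈ J
    · rw [(hJ j).1 hj]; simp [he, hj]
    · simp only [he, if_neg hj, one_mul]
      have hne : ¬ (Lt i j = -L i j) := fun h => hj ((hJ j).2 h)
      rcases hpmt i j with h2 | h2 <;> rcases hpm i j with h1 | h1 <;>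
        rw [h1] at hne <;> rw [h2] at hne ⊢ <;> norm_num at hne
      · exact h1.symm
      · exact h1.symm
  -- other rows agree
  have hLt_off : ∀ i', i' ≠ i → ∀ j, Lt i' j = L i' j := by
    intro i' hi' j
    refine Fin.cases ?_ ?_ j
    · simp [hLtdef, hLdef, augment]
    · intro j'; simpa [hLtdef, hLdef, augment] using hrow i' hi' j'
  -- change of the information matrix
  have hS : ∀ j l, infoMat Xt j l
      = infoMat X j l + (e j * e l - 1) * (L i j * L i l) := by
    intro j l
    have h1 : infoMat Xt j l - infoMat X j l = Lt i j * Lt i l - L i j * L i l := by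
      rw [info_apply, info_apply, ← Finset.sum_sub_distrib]
      simp only [← hLtdef, ← hLdef]
      rw [Finset.sum_eq_single i]
      · intro b _ hb; rw [hLt_off b hb j, hLt_off b hb l]; ring
      · simp
    rw [hLt_row j, hLt_row l] at h1
    linarith [h1]
  have hsq : ∀ j, L i j * L i j = 1 := by
    intro j; rcases hpm i j with h | h <;> rw [h] <;> norm_num
  have hesq : ∀ j, e j * e j = 1 := by
    intro j; by_cases hj : j ∈ J <;> simp [he, hj]
  -- key rewriting of the difference
  have key : Qcrit Xt - Qcrit X
      = ∑ j, ∑ l, (2 * infoMat X j l * (e j * e l - 1) * (L i j * L i l)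
          + (2 - 2 * (e j * e l))) := by
    unfold Qcrit
    rw [← Finset.sum_sub_distrib]
    refine Finset.sum_congr rfl fun j _ => ?_
    rw [← Finset.sum_sub_distrib]
    refine Finset.sum_congr rfl fun l _ => ?_
    rw [hS j l]
    have hp : (e j * e l) * (e j * e l) = 1 := by
      rw [mul_mul_mul_comm, hesq j, hesq l, one_mul]
    have hq : (L i j * L i l) * (L i j * L i l) = 1 := by
      rw [mul_mul_mul_comm, hsq j, hsq l, one_mul]
    linear_combination (L i j * L i l)^2 * hp + (2 - 2*(e j * e l)) * hq
  rw [key]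
  simp only [Finset.sum_add_distrib]
  -- part B : constant/epsilon part
  have hcard : (Jᶜ.card : ℝ) = (k : ℝ) + 1 - J.card := by
    rw [Finset.card_compl, Nat.cast_sub (Finset.card_le_univ J),
      Fintype.card_fin]
    push_cast; ring
  have hE : (∑ j, e j) = (k : ℝ) + 1 - 2 * J.card := by
    rw [← Finset.sum_add_sum_compl J]
    have h1 : ∑ j ∈ J, e j = -(J.card : ℝ) := by
      simp [he, Finset.sum_ite_of_true]
    have h2 : ∑ j ∈ Jᶜ, e j = (Jᶜ.card : ℝ) := by
      rw [Finset.sum_congr rfl (fun j hj => ?_), Finset.sum_const,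
        nsmul_eq_mul, mul_one]
      simp [he, Finset.mem_compl.mp hj]
    rw [h1, h2, hcard]; ring
  have hB : ∑ j, ∑ l, (2 - 2 * (e j * e l))
      = 8 * (J.card : ℝ) * ((k : ℝ) + 1 - J.card) := by
    have inner : ∀ j : Fin (k+1), ∑ l, (2 - 2 * (e j * e l))
        = 2*((k:ℝ)+1) - 2 * e j * ((k:ℝ) + 1 - 2*J.card) := by
      intro j
      have h1 : ∑ l, (2 - 2 * (e j * e l))
          = ∑ _l : Fin (k+1), (2:ℝ) - ∑ l, (2 * e j) * e l := by
        rw [← Finset.sum_sub_distrib]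
        exact Finset.sum_congr rfl fun l _ => by ring
      rw [h1, ← Finset.mul_sum, hE, Finset.sum_const, Finset.card_univ,
        Fintype.card_fin, nsmul_eq_mul]
      push_cast; ring
    rw [Finset.sum_congr rfl (fun j _ => inner j)]
    have h2 : ∑ j : Fin (k+1), (2*((k:ℝ)+1) - 2 * e j * ((k:ℝ) + 1 - 2*J.card))
        = ∑ _j : Fin (k+1), (2*((k:ℝ)+1))
          - ∑ j, (2*((k:ℝ) + 1 - 2*J.card)) * e j := by
      rw [← Finset.sum_sub_distrib]
      exact Finset.sum_congr rfl fun j _ => by ring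
    rw [h2, Finset.sum_const, Finset.card_univ, Fintype.card_fin,
      nsmul_eq_mul, ← Finset.mul_sum, hE]
    push_cast; ring
  -- part A : the cross term
  have hA : ∑ j, ∑ l, (2 * infoMat X j l * (e j * e l - 1) * (L i j * L i l))
      = -8 * ∑ j ∈ J, (L i j * ∑ l ∈ Jᶜ, infoMat X j l * L i l) := by
    have hsplit : ∀ (f : Fin (k+1) → Fin (k+1) → ℝ),
        ∑ j, ∑ l, f j l
          = (∑ j ∈ J, ∑ l ∈ J, f j l) + (∑ j ∈ J, ∑ l ∈ Jᶜ, f j l)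
            + ((∑ j ∈ Jᶜ, ∑ l ∈ J, f j l) + (∑ j ∈ Jᶜ, ∑ l ∈ Jᶜ, f j l)) := by
      intro f
      rw [← Finset.sum_add_sum_compl J (fun j => ∑ l, f j l)]
      congr 1 <;>
        · rw [← Finset.sum_add_distrib]
          exact Finset.sum_congr rfl fun j _ =>
            (Finset.sum_add_sum_compl J (fun l => f j l)).symm
    rw [hsplit]
    have hJJ : ∑ j ∈ J, ∑ l ∈ J, (2 * infoMat X j l * (e j * e l - 1) * (L i j * L i l)) = 0 := by
      refine Finset.sum_eq_zero fun j hj => Finset.sum_eq_zero fun l hl => ?_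
      simp [he, hj, hl]
    have hCC : ∑ j ∈ Jᶜ, ∑ l ∈ Jᶜ, (2 * infoMat X j l * (e j * e l - 1) * (L i j * L i l)) = 0 := by
      refine Finset.sum_eq_zero fun j hj => Finset.sum_eq_zero fun l hl => ?_
      simp [he, Finset.mem_compl.mp hj, Finset.mem_compl.mp hl]
    have hJC : ∑ j ∈ J, ∑ l ∈ Jᶜ, (2 * infoMat X j l * (e j * e l - 1) * (L i j * L i l))
        = -4 * ∑ j ∈ J, (L i j * ∑ l ∈ Jᶜ, infoMat X j l * L i l) := by
      rw [Finset.mul_sum]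
      refine Finset.sum_congr rfl fun j hj => ?_
      rw [Finset.mul_sum, Finset.mul_sum]
      refine Finset.sum_congr rfl fun l hl => ?_
      simp only [he, if_pos hj, if_neg (Finset.mem_compl.mp hl)]
      ring
    have hCJ : ∑ j ∈ Jᶜ, ∑ l ∈ J, (2 * infoMat X j l * (e j * e l - 1) * (L i j * L i l))
        = -4 * ∑ j ∈ J, (L i j * ∑ l ∈ Jᶜ, infoMat X j l * L i l) := by
      rw [Finset.sum_comm]
      rw [Finset.mul_sum]
      refine Finset.sum_congr rfl fun j hj => ?_
      rw [Finset.mul_sum, Finset.mul_sum]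
      refine Finset.sum_congr rfl fun l hl => ?_
      simp only [he, if_pos hj, if_neg (Finset.mem_compl.mp hl)]
      rw [info_symm X l j]
      ring
    rw [hJJ, hCC, hJC, hCJ]
    ring
  rw [hA, hB]
  ring
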